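/- Let β > 1 and let m₀ = m₀(β) > 0 be the largest solution of m₀ = tanh(β m₀). Then β(1 − m₀²) < 1. -/

import Mathlib

/-- At the positive fixed point `m₀ = tanh(β m₀)` of the Curie–Weiss equation
(β > 1), the slope satisfies `β(1 − m₀²) < 1`. -/
theorem curieWeiss_slope_lt_one
    (β m₀ : ℝ) (hβ : 1 < β) (hm₀ : 0 < m₀)
    (hfix : m₀ = Real.tanh (β * m₀))
    (hmax : ∀ m : ℝ, m = Real.tanh (β * m) → m ≤ m₀) :
    β * (1 - m₀ ^ 2) < 1 := by
  set y := β * m₀ with hy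
  have hy0 : 0 < y := mul_pos (by linarith) hm₀
  have hcosh : 0 < Real.cosh y := Real.cosh_pos y
  have hsinh : y < Real.sinh y := Real.self_lt_sinh_iff.mpr hy0
  have h1c : 1 ≤ Real.cosh y := Real.one_le_cosh y
  have key : y < Real.sinh y * Real.cosh y :=
    lt_of_lt_of_le hsinh (le_mul_of_one_le_right (by linarith) h1c)
  have hid : Real.cosh y ^ 2 - Real.sinh y ^ 2 = 1 := Real.cosh_sq_sub_sinh_sq y
  have htanh : m₀ = Real.sinh y / Real.cosh y := by
    rw [hfix, Real.tanh_eq_sinh_div_cosh]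
  rw [← mul_lt_mul_iff_of_pos_right hm₀]
  have hm : β * m₀ = y := rfl
  have hmsq : m₀ ^ 2 = Real.sinh y ^ 2 / Real.cosh y ^ 2 := by
    rw [htanh]; ring
  rw [hmsq]
  rw [htanh]

  have hmc : m₀ * Real.cosh y = Real.sinh y := by
    rw [htanh]; field_simp
  have hy' : y * Real.cosh y = β * Real.sinh y := by
    rw [← hmc, hy]; ring
  have hbs : β * Real.sinh y < Real.sinh y * Real.cosh y ^ 2 := by
    nlinarith [mul_lt_mul_of_pos_right key hcosh, hy']
  field_simp
  have hs0 : 0 < Real.sinh y := lt_trans hy0 hsinh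
  rw [hid]
  nlinarith [hbs, mul_pos hcosh hcosh, hcosh]
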